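/- For every natural number n, the number of well-formed expressions whose underlying multiset consists of exactly n copies of 2 and n+1 copies of 0 equals (2n)! / (n! · (n+1)!), the n-th Catalan number. -/

import Mathlib

/-- `C v` is the length of `v` minus the sum of its entries. -/
def C (v : List ℕ) : ℤ := (v.length : ℤ) - (v.sum : ℤ)

/-- A list of natural numbers is a well-formed expression (Polish notation
encoding of an ordered rooted tree by outdegrees) if it is of the form
`d :: (w₁ ++ ⋯ ++ w_d)` where each `wᵢ` is a well-formed expression. -/
inductive IsWF : List ℕ → Prop
  | node (d : ℕ) (ws : List (List ℕ)) (hlen : ws.length = d)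
      (h : ∀ w ∈ ws, IsWF w) : IsWF (d :: ws.flatten)

/-- The `k`-rotation of `s = u ++ v` with `v` of length `k` is `v ++ u`. -/
def krot (k : ℕ) (s : List ℕ) : List ℕ :=
  s.drop (s.length - k) ++ s.take (s.length - k)

/-- Polish-notation encoding of a binary tree. -/
def enc : Tree Unit → List ℕ
  | BinaryTree.nil => [0]
  | BinaryTree.node _ l r => 2 :: (enc l ++ enc r)

lemma enc_prefix : ∀ (t₁ t₂ : Tree Unit) (l₁ l₂ : List ℕ),
    enc t₁ ++ l₁ = enc t₂ ++ l₂ → t₁ = t₂ ∧ l₁ = l₂ := by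
  intro t₁
  induction t₁ with
  | nil =>
    intro t₂ l₁ l₂ h
    cases t₂ with
    | nil => simpa [enc] using h
    | node a l r => simp [enc] at h
  | node a l r ihl ihr =>
    intro t₂ l₁ l₂ h
    cases t₂ with
    | nil => simp [enc] at h
    | node b l' r' =>
      simp only [enc, List.cons_append, List.cons.injEq, List.append_assoc] at h
      obtain ⟨-, h⟩ := h
      obtain ⟨rfl, h2⟩ := ihl l' _ _ h
      obtain ⟨rfl, rfl⟩ := ihr r' _ _ h2
      cases a; cases b
      exact ⟨rfl, rfl⟩

lemma enc_injective : Function.Injective enc := by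
  intro t₁ t₂ h
  exact (enc_prefix t₁ t₂ [] [] (by simpa using h)).1

lemma enc_isWF (t : Tree Unit) : IsWF (enc t) := by
  induction t with
  | nil => exact IsWF.node 0 [] rfl (by simp)
  | node a l r ihl ihr =>
    have : enc (Tree.node a l r) = 2 :: [enc l, enc r].flatten := by
      simp [enc]
    rw [this]
    exact IsWF.node 2 [enc l, enc r] rfl (by
      intro w hw
      simp at hw
      rcases hw with rfl | rfl <;> assumption)

lemma enc_multiset (t : Tree Unit) :
    (↑(enc t) : Multiset ℕ)
      = Multiset.replicate t.numNodes 2 + Multiset.replicate t.numLeaves 0 := by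
  induction t with
  | nil => simp [enc, BinaryTree.numNodes, BinaryTree.numLeaves]
  | node a l r ihl ihr =>
    have : (↑(enc (Tree.node a l r)) : Multiset ℕ)
        = 2 ::ₘ ((enc l : Multiset ℕ) + (enc r : Multiset ℕ)) := by
      simp [enc]
    rw [this, ihl, ihr]
    simp only [BinaryTree.numNodes, BinaryTree.numLeaves, Multiset.replicate_add,
      Multiset.replicate_succ, ← Multiset.singleton_add, Multiset.replicate_one]
    abel

lemma decode (w : List ℕ) (hw : IsWF w) (h2 : ∀ x ∈ w, x = 0 ∨ x = 2) :
    ∃ t : Tree Unit, enc t = w := by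
  induction hw with
  | node d ws hlen h ih =>
    rcases h2 d (by simp) with rfl | rfl
    · have : ws = [] := List.length_eq_zero_iff.mp hlen
      subst this
      exact ⟨Tree.nil, by simp [enc]⟩
    · match ws, hlen with
      | [w₁, w₂], _ =>
        obtain ⟨t₁, ht₁⟩ := ih w₁ (by simp) (fun x hx => h2 x (by simp [hx]))
        obtain ⟨t₂, ht₂⟩ := ih w₂ (by simp) (fun x hx => h2 x (by simp [hx]))
        exact ⟨Tree.node () t₁ t₂, by simp [enc, ht₁, ht₂]⟩

theorem stmt_13 (n : ℕ) :
    {w : List ℕ | (↑w : Multiset ℕ)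
        = Multiset.replicate n 2 + Multiset.replicate (n + 1) 0 ∧ IsWF w}.ncard
      = (2 * n).factorial / (n.factorial * (n + 1).factorial) := by
  have hset : {w : List ℕ | (↑w : Multiset ℕ)
        = Multiset.replicate n 2 + Multiset.replicate (n + 1) 0 ∧ IsWF w}
      = ↑((Tree.treesOfNumNodesEq n).image enc) := by
    ext w
    simp only [Set.mem_setOf_eq, Finset.coe_image, Set.mem_image, Finset.mem_coe,
      BinaryTree.mem_treesOfNumNodesEq]
    constructor
    · rintro ⟨hm, hwf⟩
      have h2 : ∀ x ∈ w, x = 0 ∨ x = 2 := by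
        intro x hx
        have : x ∈ (↑w : Multiset ℕ) := by simpa using hx
        rw [hm] at this
        rcases Multiset.mem_add.mp this with h | h
        · right; exact Multiset.eq_of_mem_replicate h
        · left; exact Multiset.eq_of_mem_replicate h
      obtain ⟨t, rfl⟩ := decode w hwf h2
      refine ⟨t, ?_, rfl⟩
      have := enc_multiset t
      rw [hm] at this
      have hcount := congrArg (Multiset.count 2) this
      simpa [Multiset.count_replicate] using hcount.symm
    · rintro ⟨t, rfl, rfl⟩
      refine ⟨?_, enc_isWF t⟩
      rw [enc_multiset, Tree.numLeaves, BinaryTree.numLeaves_eq_numNodes_succ]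
  rw [hset, Set.ncard_coe_finset,
    Finset.card_image_of_injective _ enc_injective,
    BinaryTree.treesOfNumNodesEq_card_eq_catalan]
  have key : (2 * n).factorial = catalan n * (n.factorial * (n + 1).factorial) := by
    have h1 : (n + 1) * catalan n = n.centralBinom := succ_mul_catalan_eq_centralBinom n
    have h2 : (2 * n).choose n * (n.factorial * n.factorial) = (2 * n).factorial := by
      have := Nat.choose_mul_factorial_mul_factorial (show n ≤ 2 * n by omega)
      have h3 : 2 * n - n = n := by omega
      rw [h3] at this
      linarith [this]
    rw [Nat.centralBinom] at h1
    calc (2 * n).factorial = (2 * n).choose n * (n.factorial * n.factorial) := h2.symm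
      _ = (n + 1) * catalan n * (n.factorial * n.factorial) := by rw [h1]
      _ = catalan n * (n.factorial * ((n + 1) * n.factorial)) := by ring
      _ = catalan n * (n.factorial * (n + 1).factorial) := by rw [Nat.factorial_succ]
  rw [key, Nat.mul_div_cancel _ (by positivity)]
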